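/- arXiv:2110.12806 — 2 statements merged into one kernel-verified Lean document; each statement's English description precedes it below -/
import Mathlib

section
/- Let (g_b) be a family of self-maps of a set M satisfying commutativity (g_{b₁} ∘ g_{b₂} = g_{b₂} ∘ g_{b₁}) and coherency ((g_b)^[a] = (g_{b/gcd(a,b)})^[a/gcd(a,b)] for all a ≥ 0, b ≥ 1, with in particular g_{b₁ b₂}^[b₂] = g_{b₁}). Then for all nonnegative integers a₁, a₂ and positive integers b₁, b₂: (g_{b₂})^[a₂] ∘ (g_{b₁})^[a₁] = (g_{b₁ b₂})^[a₁ b₂ + a₂ b₁]. -/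
/-- Lemma 2.2: for a commuting, coherent family `g : ℕ+ → M → M`,
`(g b₂)^[a₂] ∘ (g b₁)^[a₁] = (g (b₁*b₂))^[a₂*b₁ + a₁*b₂]`. -/
theorem iterate_comp_eq {M : Type*} (g : ℕ+ → M → M)
    (hcomm : ∀ b₁ b₂ : ℕ+, g b₁ ∘ g b₂ = g b₂ ∘ g b₁)
    (hcoh : ∀ b₁ b₂ : ℕ+, (g (b₁ * b₂))^[(b₂ : ℕ)] = g b₁) :
    ∀ (a₁ a₂ : ℕ) (b₁ b₂ : ℕ+),
      (g b₂)^[a₂] ∘ (g b₁)^[a₁] = (g (b₁ * b₂))^[a₂ * (b₁ : ℕ) + a₁ * (b₂ : ℕ)] := by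
  intro a₁ a₂ b₁ b₂
  have h1 : g b₁ = (g (b₁ * b₂))^[(b₂ : ℕ)] := (hcoh b₁ b₂).symm
  have h2 : g b₂ = (g (b₁ * b₂))^[(b₁ : ℕ)] := by
    rw [mul_comm]; exact (hcoh b₂ b₁).symm
  rw [h1, h2, ← Function.iterate_mul, ← Function.iterate_mul,
    ← Function.iterate_add, Nat.mul_comm (b₁:ℕ), Nat.mul_comm (b₂:ℕ)]
end

section
/- Let (g_b) be a family of self-maps of a set M such that g_{b₁ b₂}^[b₂] = g_{b₁} for all positive integers b₁, b₂ and g₁ = f. Define Ψ : ℚ≥0 → (M → M) on nonnegative rationals by Ψ(a/b) = (g_b)^[a] (well-defined by coherency). Then Ψ is a monoid homomorphism from (ℚ≥0, +) to (M → M, ∘): Ψ(0) = id and Ψ(q₁ + q₂) = Ψ(q₁) ∘ Ψ(q₂). -/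
/-- If `g : ℕ+ → M → M` is a commuting, coherent family and `Ψ : ℚ≥0 → M → M` satisfies
`Ψ (a/b) = (g b)^[a]`, then `Ψ` is a monoid homomorphism from `(ℚ≥0, +)` to `(M → M, ∘)`. -/
theorem psi_monoid_hom {M : Type*} (g : ℕ+ → M → M)
    (hcomm : ∀ b₁ b₂ : ℕ+, g b₁ ∘ g b₂ = g b₂ ∘ g b₁)
    (hcoh : ∀ b₁ b₂ : ℕ+, (g (b₁ * b₂))^[(b₂ : ℕ)] = g b₁)
    (Ψ : ℚ≥0 → M → M)
    (hΨ : ∀ (a : ℕ) (b : ℕ+), Ψ ((a : ℚ≥0) / ((b : ℕ) : ℚ≥0)) = (g b)^[a]) :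
    Ψ 0 = id ∧ ∀ q₁ q₂ : ℚ≥0, Ψ (q₁ + q₂) = Ψ q₁ ∘ Ψ q₂ := by
  constructor
  · have := hΨ 0 1
    simpa using this
  · intro q₁ q₂
    set a₁ := q₁.num with ha₁
    set d₁ := q₁.den with hd₁'
    set a₂ := q₂.num with ha₂
    set d₂ := q₂.den with hd₂'
    set b : ℕ+ := ⟨d₁ * d₂,
      Nat.mul_pos (Nat.pos_of_ne_zero q₁.den_ne_zero) (Nat.pos_of_ne_zero q₂.den_ne_zero)⟩ with hb
    have hbv : ((b : ℕ) : ℚ≥0) = (d₁ : ℚ≥0) * (d₂ : ℚ≥0) := by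
      have : (b : ℕ) = d₁ * d₂ := rfl
      rw [this]; push_cast; ring
    have hd₁ : ((d₁ : ℚ≥0)) ≠ 0 := by exact_mod_cast q₁.den_ne_zero
    have hd₂ : ((d₂ : ℚ≥0)) ≠ 0 := by exact_mod_cast q₂.den_ne_zero
    have h1 : q₁ = ((a₁ * d₂ : ℕ) : ℚ≥0) / ((b : ℕ) : ℚ≥0) := by
      rw [hbv]; push_cast
      rw [mul_div_mul_right _ _ hd₂, ha₁, hd₁', NNRat.num_div_den]
    have h2 : q₂ = ((a₂ * d₁ : ℕ) : ℚ≥0) / ((b : ℕ) : ℚ≥0) := by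
      rw [hbv]; push_cast
      rw [mul_comm (d₁ : ℚ≥0), mul_div_mul_right _ _ hd₁, ha₂, hd₂', NNRat.num_div_den]
    calc Ψ (q₁ + q₂)
        = Ψ (((a₁ * d₂ + a₂ * d₁ : ℕ) : ℚ≥0) / ((b : ℕ) : ℚ≥0)) := by
          rw [h1, h2, ← add_div]; push_cast; ring_nf
      _ = (g b)^[a₁ * d₂ + a₂ * d₁] := hΨ _ _
      _ = (g b)^[a₁ * d₂] ∘ (g b)^[a₂ * d₁] := by rw [Function.iterate_add]
      _ = Ψ q₁ ∘ Ψ q₂ := by rw [h1, h2, hΨ, hΨ]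
end
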